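/- Let σ > 0, h > 0, γ > 0, g_max > 0 be real constants, let α₁ > α₂ ≥ 0 be reals, and fix ᾱ ∈ (0, α₁ − α₂). For each P > 1 set Q(P) = P^{ᾱ/2}·h·γ/(2·g_max) and ξ(P) = γ/Q(P). Then for every ε > 0 there exists P₀ > 1 such that for all P ≥ P₀, for every real g with |g| ≤ g_max and every x₀ ∈ Ω(ξ(P), Q(P)), the probability under z distributed as the Gaussian measure N(0, σ²) on ℝ of the event { z : there exists x' ∈ Ω(ξ(P), Q(P)) with x' ≠ x₀ and |P^{α₁/2}·h·x' − (P^{α₁/2}·h·x₀ + P^{α₂/2}·g + z)| ≤ |P^{α₂/2}·g + z| } is less than ε. (In particular, the minimum-distance decoding error probability for a PAM symbol x₀ observed through y = P^{α₁/2}·h·x₀ + P^{α₂/2}·g + z tends to 0 as P → ∞, uniformly over the transmitted symbol and the bounded interference g.) -/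

import Mathlib

open MeasureTheory ProbabilityTheory Real Filter

/-- The PAM constellation `Ω(ξ, Q) = { ξ·a : a ∈ ℤ, −Q ≤ a ≤ Q }`. -/
def PAM (ξ Q : ℝ) : Set ℝ :=
  {x | ∃ a : ℤ, x = ξ * a ∧ -Q ≤ (a : ℝ) ∧ (a : ℝ) ≤ Q}

/-- For the channel `y = P^{α₁/2}·h·x + P^{α₂/2}·g + z` with bounded interference `g`
and Gaussian noise `z ~ N(0, σ²)`, the minimum-distance decoding error probability
for a PAM symbol vanishes as `P → ∞`, uniformly in the symbol and in `g`. -/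
theorem pam_decoding_error_tendsto_zero
    (σ h γ gmax α₁ α₂ ᾱ : ℝ)
    (hσ : 0 < σ) (hh : 0 < h) (hγ : 0 < γ) (hgmax : 0 < gmax)
    (hα₂ : 0 ≤ α₂) (hα : α₂ < α₁) (hᾱ₀ : 0 < ᾱ) (hᾱ₁ : ᾱ < α₁ - α₂)
    (Q ξ : ℝ → ℝ)
    (hQ : ∀ P : ℝ, Q P = P ^ (ᾱ / 2) * h * γ / (2 * gmax))
    (hξ : ∀ P : ℝ, ξ P = γ / Q P) :
    ∀ ε > (0 : ℝ), ∃ P₀ > (1 : ℝ), ∀ P ≥ P₀, ∀ g : ℝ, |g| ≤ gmax →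
      ∀ x₀ ∈ PAM (ξ P) (Q P),
        (gaussianReal 0 ⟨σ ^ 2, sq_nonneg σ⟩)
          {z : ℝ | ∃ x' ∈ PAM (ξ P) (Q P), x' ≠ x₀ ∧
            |P ^ (α₁ / 2) * h * x' - (P ^ (α₁ / 2) * h * x₀ + P ^ (α₂ / 2) * g + z)|
              ≤ |P ^ (α₂ / 2) * g + z|}
          < ENNReal.ofReal ε := by
  intro ε hε
  set μ := gaussianReal 0 ⟨σ ^ 2, sq_nonneg σ⟩ with hμ
  -- Step 1: a Gaussian tail bound
  have htail : ∃ n : ℕ, μ {z : ℝ | (n : ℝ) ≤ |z|} < ENNReal.ofReal ε := by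
    set S : ℕ → Set ℝ := fun n => {z : ℝ | (n : ℝ) ≤ |z|} with hS
    have hanti : Antitone S := by
      intro m n hmn z hz
      simp only [hS, Set.mem_setOf_eq] at hz ⊢
      exact le_trans (by exact_mod_cast hmn) hz
    have hmeas : ∀ n : ℕ, NullMeasurableSet (S n) μ := by
      intro n
      exact (measurableSet_le measurable_const measurable_abs).nullMeasurableSet
    have hinter : ⋂ n, S n = ∅ := by
      ext z
      simp only [Set.mem_iInter, Set.mem_setOf_eq, Set.mem_empty_iff_false, iff_false, S,
        not_forall, not_le]
      obtain ⟨n, hn⟩ := exists_nat_gt |z|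
      exact ⟨n, hn⟩
    have hT := tendsto_measure_iInter_atTop hmeas hanti ⟨0, by haveI := instIsProbabilityMeasureGaussianReal 0 ⟨σ ^ 2, sq_nonneg σ⟩; exact measure_ne_top μ _⟩
    rw [hinter, measure_empty] at hT
    exact (hT.eventually_lt_const (ENNReal.ofReal_pos.mpr hε)).exists
  obtain ⟨n, hn⟩ := htail
  -- Step 2: the lower bound on |z| forced by a decoding error tends to ∞
  have hpow : Tendsto (fun P : ℝ => gmax * P ^ ((α₁ - ᾱ) / 2) - gmax * P ^ (α₂ / 2))
      atTop atTop := by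
    have hd : 0 < (α₁ - ᾱ) / 2 - α₂ / 2 := by linarith
    have h1 : Tendsto (fun P : ℝ => gmax * P ^ ((α₁ - ᾱ) / 2 - α₂ / 2) - gmax)
        atTop atTop := by
      have := (tendsto_rpow_atTop hd).const_mul_atTop hgmax
      exact tendsto_atTop_add_const_right atTop (-gmax) this
    refine tendsto_atTop_mono' atTop ?_ h1
    filter_upwards [eventually_ge_atTop (1 : ℝ)] with P hP
    have hP0 : (0 : ℝ) < P := by linarith
    have hb : (1 : ℝ) ≤ P ^ (α₂ / 2) := Real.one_le_rpow hP (by linarith)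
    have he : (1 : ℝ) ≤ P ^ ((α₁ - ᾱ) / 2 - α₂ / 2) := Real.one_le_rpow hP (by linarith)
    have hsplit : P ^ ((α₁ - ᾱ) / 2) = P ^ (α₂ / 2) * P ^ ((α₁ - ᾱ) / 2 - α₂ / 2) := by
      rw [← Real.rpow_add hP0]; ring_nf
    rw [hsplit]
    nlinarith [mul_nonneg (mul_nonneg hgmax.le (sub_nonneg.mpr hb)) (sub_nonneg.mpr he)]
  obtain ⟨P₁, hP₁⟩ := eventually_atTop.mp (hpow.eventually_ge_atTop (n : ℝ))
  refine ⟨max P₁ 2, lt_of_lt_of_le one_lt_two (le_max_right _ _), ?_⟩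
  intro P hP g hg x₀ hx₀
  have hP2 : (2 : ℝ) ≤ P := le_trans (le_max_right _ _) hP
  have hP0 : (0 : ℝ) < P := by linarith
  have hQpos : 0 < Q P := by
    rw [hQ]
    have := Real.rpow_pos_of_pos hP0 (ᾱ / 2)
    positivity
  have hξpos : 0 < ξ P := by rw [hξ]; positivity
  obtain ⟨a₀, hx₀a, _, _⟩ := hx₀
  -- the error event is contained in the tail event
  have hsub : {z : ℝ | ∃ x' ∈ PAM (ξ P) (Q P), x' ≠ x₀ ∧
        |P ^ (α₁ / 2) * h * x' - (P ^ (α₁ / 2) * h * x₀ + P ^ (α₂ / 2) * g + z)|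
          ≤ |P ^ (α₂ / 2) * g + z|} ⊆ {z : ℝ | (n : ℝ) ≤ |z|} := by
    intro z hz
    obtain ⟨x', ⟨a', hx'a, _, _⟩, hne, hle⟩ := hz
    have haa : a' ≠ a₀ := by
      rintro rfl
      exact hne (by rw [hx'a, hx₀a])
    have h1 : (1 : ℝ) ≤ |(a' : ℝ) - (a₀ : ℝ)| := by
      have h := Int.one_le_abs (sub_ne_zero.mpr haa)
      have h' : ((1:ℤ):ℝ) ≤ ((|a' - a₀|:ℤ):ℝ) := Int.cast_le.mpr h
      push_cast at h'
      exact h'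
    have hdist : ξ P ≤ |x' - x₀| := by
      rw [hx'a, hx₀a, ← mul_sub, abs_mul, abs_of_pos hξpos]
      exact le_mul_of_one_le_right hξpos.le h1
    set D := P ^ (α₁ / 2) * h with hD
    have hDpos : 0 < D := by
      have := Real.rpow_pos_of_pos hP0 (α₁ / 2); positivity
    set w := P ^ (α₂ / 2) * g + z with hw
    have h2 : D * ξ P ≤ 2 * |w| := by
      have e1 : D * ξ P ≤ |D * x' - D * x₀| := by
        rw [← mul_sub, abs_mul, abs_of_pos hDpos]
        exact mul_le_mul_of_nonneg_left hdist hDpos.le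
      have e2 : |D * x' - D * x₀| ≤ |D * x' - (D * x₀ + P ^ (α₂ / 2) * g + z)| + |w| := by
        have : D * x' - D * x₀ = (D * x' - (D * x₀ + P ^ (α₂ / 2) * g + z)) + w := by
          rw [hw]; ring
        rw [this]
        exact abs_add_le _ _
      linarith [hle]
    have hppos : 0 < P ^ (α₂ / 2) := Real.rpow_pos_of_pos hP0 _
    have h3 : D * ξ P / 2 - P ^ (α₂ / 2) * gmax ≤ |z| := by
      have e1 : |w| ≤ P ^ (α₂ / 2) * |g| + |z| := by
        calc |w| ≤ |P ^ (α₂ / 2) * g| + |z| := abs_add_le _ _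
          _ = P ^ (α₂ / 2) * |g| + |z| := by rw [abs_mul, abs_of_pos hppos]
      have e2 : P ^ (α₂ / 2) * |g| ≤ P ^ (α₂ / 2) * gmax :=
        mul_le_mul_of_nonneg_left hg hppos.le
      linarith
    have h4 : D * ξ P / 2 = gmax * P ^ ((α₁ - ᾱ) / 2) := by
      rw [hD, hξ, hQ, show (α₁ - ᾱ) / 2 = α₁ / 2 - ᾱ / 2 by ring, Real.rpow_sub hP0]
      have hᾱne : P ^ (ᾱ / 2) ≠ 0 := (Real.rpow_pos_of_pos hP0 _).ne'
      field_simp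
    have h5 : (n : ℝ) ≤ gmax * P ^ ((α₁ - ᾱ) / 2) - gmax * P ^ (α₂ / 2) :=
      hP₁ P (le_trans (le_max_left _ _) hP)
    simp only [Set.mem_setOf_eq]
    linarith [h2, h3, h4, h5]
  exact lt_of_le_of_lt (measure_mono hsub) hn
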